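/- Let I and J be summable ideals on ω determined by weight functions μ and ν respectively, and suppose both are tall. Then there exists A ⊆ ω with A not in the dual filter J* such that I ≤_RB (J restricted to A), i.e., there is a finite-to-one function f : A → ω with, for all X ⊆ ω, X ∈ I iff f⁻¹[X] ∈ J ∩ P(A). -/

import Mathlib

open scoped ENNReal

/-- The mass of a set of integers under a weight function. -/
noncomputable def mass (μ : ℕ → ℝ≥0∞) (X : Set ℕ) : ℝ≥0∞ := ∑' i : X, μ i

/-- Membership in the summable ideal determined by `μ`. -/
def memSummable (μ : ℕ → ℝ≥0∞) (X : Set ℕ) : Prop := mass μ X < ⊤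

/-- The summable ideal of `μ` is tall. -/
def TallSummable (μ : ℕ → ℝ≥0∞) : Prop :=
  ∀ A : Set ℕ, A.Infinite → ∃ B ⊆ A, B.Infinite ∧ memSummable μ B

/- ### Auxiliary material -/

/-- The measure on `ℕ` associated to a weight function. -/
noncomputable def massMeas (ν : ℕ → ℝ≥0∞) : MeasureTheory.Measure ℕ :=
  MeasureTheory.Measure.sum (fun i => ν i • MeasureTheory.Measure.dirac i)

lemma massMeas_apply (ν : ℕ → ℝ≥0∞) (s : Set ℕ) : massMeas ν s = mass ν s := by
  rw [massMeas, MeasureTheory.Measure.sum_apply _ MeasurableSpace.measurableSet_top, mass,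
    tsum_subtype]
  congr 1
  ext i
  rw [MeasureTheory.Measure.smul_apply,
    MeasureTheory.Measure.dirac_apply' _ MeasurableSpace.measurableSet_top, smul_eq_mul]
  by_cases h : i ∈ s <;> simp [Set.indicator, h]

lemma mass_iUnion {ι : Type*} [Countable ι] (ν : ℕ → ℝ≥0∞) {t : ι → Set ℕ}
    (h : Pairwise (Function.onFun Disjoint t)) : mass ν (⋃ i, t i) = ∑' i, mass ν (t i) := by
  rw [← massMeas_apply, MeasureTheory.measure_iUnion h (fun i => MeasurableSpace.measurableSet_top)]
  simp only [massMeas_apply]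

lemma mass_mono (ν : ℕ → ℝ≥0∞) {X Y : Set ℕ} (h : X ⊆ Y) : mass ν X ≤ mass ν Y := by
  rw [mass, mass, tsum_subtype, tsum_subtype]
  exact ENNReal.tsum_le_tsum (fun i => Set.indicator_le_indicator_of_subset h (fun _ => zero_le) i)

lemma mass_finset (ν : ℕ → ℝ≥0∞) (s : Finset ℕ) :
    mass ν (s : Set ℕ) = ∑ i ∈ s, ν i := Finset.tsum_subtype' s ν

/-- Tallness implies the weights tend to zero. -/
lemma tall_small {ν : ℕ → ℝ≥0∞} (hνtall : TallSummable ν) :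
    ∀ ε : ℝ≥0∞, ε ≠ 0 → ∃ N : ℕ, ∀ i, N ≤ i → ν i < ε := by
  intro ε hε
  by_contra h
  push_neg at h
  have hinf : {i : ℕ | ε ≤ ν i}.Infinite := by
    apply Set.infinite_of_not_bddAbove
    rintro ⟨b, hb⟩
    obtain ⟨i, hbi, hi⟩ := h (b + 1)
    exact absurd (hb hi) (by omega)
  obtain ⟨B, hBsub, hBinf, hBsum⟩ := hνtall _ hinf
  haveI := hBinf.to_subtype
  have htop : (⊤ : ℝ≥0∞) ≤ mass ν B := by
    calc (⊤ : ℝ≥0∞) = ∑' _ : B, ε := (ENNReal.tsum_const_eq_top_of_ne_zero hε).symm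
    _ ≤ mass ν B := ENNReal.tsum_le_tsum (fun i => hBsub i.2)
  rw [memSummable, top_le_iff.mp htop] at hBsum
  exact absurd hBsum (lt_irrefl _)

/-- From a divergent series we can collect arbitrarily large mass past any point. -/
lemma reach {ν : ℕ → ℝ≥0∞} (hν1 : ∀ i, ν i ≠ ⊤) (hνdiv : mass ν Set.univ = ⊤)
    (a : ℕ) (T : ℝ≥0∞) (hT : T ≠ ⊤) :
    ∃ b, a ≤ b ∧ T ≤ ∑ i ∈ Finset.Ico a b, ν i := by
  have htotal : ∑' i : ℕ, ν i = ⊤ := by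
    rw [mass] at hνdiv
    rw [← tsum_univ]
    exact hνdiv
  have htail : ∑' i : ℕ, ν (i + a) = ⊤ := by
    have hsplit := Summable.sum_add_tsum_nat_add' (f := ν) (k := a) ENNReal.summable
    by_contra hne
    have h1 : ∑ i ∈ Finset.range a, ν i ≠ ⊤ :=
      (ENNReal.sum_lt_top.2 (fun i _ => (hν1 i).lt_top)).ne
    rw [htotal] at hsplit
    exact (ENNReal.add_ne_top.2 ⟨h1, hne⟩) hsplit
  have hlt : T < ⨆ n, ∑ i ∈ Finset.range n, ν (i + a) := by
    rw [← ENNReal.tsum_eq_iSup_nat, htail]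
    exact hT.lt_top
  obtain ⟨n, hn⟩ := lt_iSup_iff.mp hlt
  refine ⟨a + n, Nat.le_add_right _ _, ?_⟩
  rw [Finset.sum_Ico_eq_sum_range]
  have : a + n - a = n := by omega
  rw [this]
  refine hn.le.trans (le_of_eq ?_)
  apply Finset.sum_congr rfl
  intro i _
  rw [Nat.add_comm]

/-- Hitting a window `[m, m + ε]` with an interval sum, provided all weights past `a`
are smaller than `ε`. -/
lemma window {ν : ℕ → ℝ≥0∞} (hν1 : ∀ i, ν i ≠ ⊤) (hνdiv : mass ν Set.univ = ⊤)
    (a : ℕ) (ε : ℝ≥0∞) (hsm : ∀ i, a ≤ i → ν i < ε) (m : ℝ≥0∞) (hm : m ≠ ⊤) :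
    ∃ b, a ≤ b ∧ m ≤ ∑ i ∈ Finset.Ico a b, ν i ∧ ∑ i ∈ Finset.Ico a b, ν i ≤ m + ε := by
  classical
  have hex : ∃ b, a ≤ b ∧ m ≤ ∑ i ∈ Finset.Ico a b, ν i := reach hν1 hνdiv a m hm
  obtain ⟨hab, hmb⟩ := Nat.find_spec hex
  rcases Nat.lt_or_ge a (Nat.find hex) with hlt | hge
  · -- Nat.find hex = b' + 1 with a ≤ b'
    have hab' : a ≤ Nat.find hex - 1 := by omega
    have hmin : ¬(a ≤ Nat.find hex - 1 ∧
        m ≤ ∑ i ∈ Finset.Ico a (Nat.find hex - 1), ν i) :=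
      Nat.find_min hex (by omega)
    have hlt' : ∑ i ∈ Finset.Ico a (Nat.find hex - 1), ν i < m := by
      rcases not_and_or.mp hmin with h | h
      · exact absurd hab' h
      · exact lt_of_not_ge h
    refine ⟨Nat.find hex, hab, hmb, ?_⟩
    have heq : Nat.find hex = (Nat.find hex - 1) + 1 := by omega
    rw [heq, Finset.sum_Ico_succ_top hab']
    exact add_le_add hlt'.le (hsm _ hab').le
  · -- Nat.find hex ≤ a, so the interval is empty and m = 0
    have hempty : Finset.Ico a (Nat.find hex) = ∅ := Finset.Ico_eq_empty (by omega)
    refine ⟨Nat.find hex, hab, hmb, ?_⟩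
    rw [hempty, Finset.sum_empty]
    exact zero_le

/-- Generic recursion producing the sequence of pairs of cut points. -/
def seqRec (F : ℕ → ℕ → ℕ × ℕ) : ℕ → ℕ × ℕ
  | 0 => F 0 0
  | n + 1 => F (n + 1) (seqRec F n).2

/-- For tall summable ideals `I = fin(μ)` and `J = fin(ν)` there is a set `A`
with `ω \ A ∉ J` (i.e. `A ∉ J*`) and a finite-to-one map `f` on `A` witnessing
`I ≤_RB J ↾ A`. -/
theorem stmt6 (μ ν : ℕ → ℝ≥0∞)
    (hμ1 : ∀ i, μ i ≠ ⊤) (hν1 : ∀ i, ν i ≠ ⊤)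
    (hμdiv : mass μ Set.univ = ⊤) (hνdiv : mass ν Set.univ = ⊤)
    (hμtall : TallSummable μ) (hνtall : TallSummable ν) :
    ∃ A : Set ℕ, ¬ memSummable ν Aᶜ ∧
      ∃ f : ℕ → ℕ, (∀ n : ℕ, (A ∩ f ⁻¹' {n}).Finite) ∧
        ∀ X : Set ℕ, memSummable μ X ↔ memSummable ν (A ∩ f ⁻¹' X) := by
  classical
  -- the key step lemma
  have hstep : ∀ n c : ℕ, ∃ p : ℕ × ℕ, c ≤ p.1 ∧ p.1 ≤ p.2 ∧
      (1 : ℝ≥0∞) ≤ ∑ i ∈ Finset.Ico c p.1, ν i ∧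
      μ n ≤ ∑ i ∈ Finset.Ico p.1 p.2, ν i ∧
      ∑ i ∈ Finset.Ico p.1 p.2, ν i ≤ μ n + 2⁻¹ ^ n := by
    intro n c
    have hε : ((2 : ℝ≥0∞)⁻¹ ^ n) ≠ 0 :=
      pow_ne_zero n (ENNReal.inv_ne_zero.2 ENNReal.ofNat_ne_top)
    obtain ⟨N, hN⟩ := tall_small hνtall _ hε
    obtain ⟨b, hb1, hb2⟩ := reach hν1 hνdiv (max c N) 1 ENNReal.one_ne_top
    have hcb : c ≤ b := le_trans (le_max_left _ _) hb1
    have hb2' : (1 : ℝ≥0∞) ≤ ∑ i ∈ Finset.Ico c b, ν i :=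
      hb2.trans (Finset.sum_le_sum_of_subset
        (Finset.Ico_subset_Ico (le_max_left _ _) le_rfl))
    have hsm : ∀ i, b ≤ i → ν i < 2⁻¹ ^ n := fun i hi =>
      hN i (le_trans (le_trans (le_max_right _ _) hb1) hi)
    obtain ⟨b2, hbb2, hm1, hm2⟩ := window hν1 hνdiv b _ hsm (μ n) (hμ1 n)
    exact ⟨(b, b2), hcb, hbb2, hb2', hm1, hm2⟩
  set F : ℕ → ℕ → ℕ × ℕ := fun n c => (hstep n c).choose with hF
  set g : ℕ → ℕ × ℕ := seqRec F with hgdef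
  set start : ℕ → ℕ := fun n => Nat.casesOn n 0 (fun k => (g k).2) with hstart
  have hg : ∀ n, g n = F n (start n) := by
    intro n
    cases n with
    | zero => rfl
    | succ k => rfl
  have hspec : ∀ n, start n ≤ (g n).1 ∧ (g n).1 ≤ (g n).2 ∧
      (1 : ℝ≥0∞) ≤ ∑ i ∈ Finset.Ico (start n) (g n).1, ν i ∧
      μ n ≤ ∑ i ∈ Finset.Ico (g n).1 (g n).2, ν i ∧
      ∑ i ∈ Finset.Ico (g n).1 (g n).2, ν i ≤ μ n + 2⁻¹ ^ n := by
    intro n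
    rw [hg n]
    exact (hstep n (start n)).choose_spec
  -- monotonicity
  have hstartsucc : ∀ n, start (n + 1) = (g n).2 := fun n => rfl
  have hmono : Monotone start := by
    apply monotone_nat_of_le_succ
    intro n
    rw [hstartsucc]
    exact le_trans (hspec n).1 (hspec n).2.1
  -- the blocks
  set B : ℕ → Finset ℕ := fun n => Finset.Ico (g n).1 (g n).2 with hB
  set C : ℕ → Finset ℕ := fun n => Finset.Ico (start n) (g n).1 with hC
  have horder : ∀ {m n : ℕ}, m < n → (g m).2 ≤ (g n).1 := by
    intro m n hmn
    calc (g m).2 = start (m + 1) := (hstartsucc m).symm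
    _ ≤ start n := hmono hmn
    _ ≤ (g n).1 := (hspec n).1
  have hBdisj : Pairwise (Function.onFun Disjoint fun n => ((B n : Set ℕ))) := by
    intro m n hmn
    simp only [Function.onFun, Set.disjoint_left]
    intro i him hin
    simp only [hB, Finset.coe_Ico, Set.mem_Ico] at him hin
    rcases lt_or_gt_of_ne hmn with h | h
    · exact absurd (lt_of_lt_of_le him.2 (le_trans (horder h) hin.1)) (lt_irrefl _)
    · exact absurd (lt_of_lt_of_le hin.2 (le_trans (horder h) him.1)) (lt_irrefl _)
  have hCdisj : Pairwise (Function.onFun Disjoint fun n => ((C n : Set ℕ))) := by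
    intro m n hmn
    simp only [Function.onFun, Set.disjoint_left]
    intro i him hin
    simp only [hC, Finset.coe_Ico, Set.mem_Ico] at him hin
    rcases lt_or_gt_of_ne hmn with h | h
    · have : (g m).1 ≤ start n := le_trans (hspec m).2.1 ((hstartsucc m) ▸ hmono h)
      exact absurd (lt_of_lt_of_le him.2 (le_trans this hin.1)) (lt_irrefl _)
    · have : (g n).1 ≤ start m := le_trans (hspec n).2.1 ((hstartsucc n) ▸ hmono h)
      exact absurd (lt_of_lt_of_le hin.2 (le_trans this him.1)) (lt_irrefl _)
  set A : Set ℕ := ⋃ n, ((B n : Set ℕ)) with hA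
  set f : ℕ → ℕ := fun i => if h : ∃ n, i ∈ B n then h.choose else 0 with hf
  have funiq : ∀ {i n}, i ∈ B n → f i = n := by
    intro i n hin
    have hex : ∃ n, i ∈ B n := ⟨n, hin⟩
    have hch : i ∈ B hex.choose := hex.choose_spec
    have : f i = hex.choose := by simp only [hf, dif_pos hex]
    rw [this]
    by_contra hne
    exact (Set.disjoint_left.mp (hBdisj hne)) hch hin
  have hfib : ∀ n, A ∩ f ⁻¹' {n} = (B n : Set ℕ) := by
    intro n
    ext i
    constructor
    · rintro ⟨hiA, hif⟩
      obtain ⟨m, hm⟩ := Set.mem_iUnion.mp hiA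
      have h1 : f i = m := funiq hm
      have h2 : f i = n := hif
      have h3 : m = n := h1.symm.trans h2
      rwa [h3] at hm
    · intro hi
      exact ⟨Set.mem_iUnion.2 ⟨n, hi⟩, funiq hi⟩
  have hpre : ∀ X : Set ℕ, A ∩ f ⁻¹' X = ⋃ n : X, ((B n : Set ℕ)) := by
    intro X
    ext i
    simp only [Set.mem_inter_iff, Set.mem_preimage, Set.mem_iUnion, hA]
    constructor
    · rintro ⟨⟨m, hm⟩, hfX⟩
      exact ⟨⟨m, funiq hm ▸ hfX⟩, hm⟩
    · rintro ⟨⟨n, hn⟩, hi⟩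
      refine ⟨⟨n, hi⟩, ?_⟩
      rw [funiq hi]
      exact hn
  -- mass of preimages
  have hmass : ∀ X : Set ℕ, mass ν (A ∩ f ⁻¹' X) = ∑' n : X, mass ν ((B n : Set ℕ)) := by
    intro X
    rw [hpre X]
    exact mass_iUnion ν (fun m n hmn => hBdisj (Subtype.coe_ne_coe.2 hmn))
  have hBlow : ∀ n, μ n ≤ mass ν ((B n : Set ℕ)) := by
    intro n
    rw [mass_finset]
    exact (hspec n).2.2.2.1
  have hBhigh : ∀ n, mass ν ((B n : Set ℕ)) ≤ μ n + 2⁻¹ ^ n := by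
    intro n
    rw [mass_finset]
    exact (hspec n).2.2.2.2
  have hgeom : ∑' n : ℕ, ((2 : ℝ≥0∞)⁻¹) ^ n = 2 := by
    rw [ENNReal.tsum_geometric, ENNReal.one_sub_inv_two, inv_inv]
  refine ⟨A, ?_, f, ?_, ?_⟩
  · -- Aᶜ has infinite mass
    intro hc
    have hsub : (⋃ n, ((C n : Set ℕ))) ⊆ Aᶜ := by
      intro i hi
      obtain ⟨n, hn⟩ := Set.mem_iUnion.mp hi
      simp only [hC, Finset.coe_Ico, Set.mem_Ico] at hn
      intro hiA
      obtain ⟨m, hm⟩ := Set.mem_iUnion.mp hiA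
      simp only [hB, Finset.coe_Ico, Set.mem_Ico] at hm
      rcases lt_trichotomy m n with h | h | h
      · exact absurd (lt_of_lt_of_le hm.2
          (le_trans ((hstartsucc m) ▸ hmono h) hn.1)) (lt_irrefl _)
      · subst h; omega
      · have : (g n).1 ≤ (g m).1 :=
          le_trans (le_trans (hspec n).2.1 ((hstartsucc n) ▸ hmono h)) (hspec m).1
        omega
    have h1 : (⊤ : ℝ≥0∞) ≤ mass ν (⋃ n, ((C n : Set ℕ))) := by
      rw [mass_iUnion ν hCdisj]
      calc (⊤ : ℝ≥0∞) = ∑' _ : ℕ, (1 : ℝ≥0∞) :=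
            (ENNReal.tsum_const_eq_top_of_ne_zero one_ne_zero).symm
      _ ≤ ∑' n : ℕ, mass ν ((C n : Set ℕ)) := by
            apply ENNReal.tsum_le_tsum
            intro n
            rw [mass_finset]
            exact (hspec n).2.2.1
    have h2 := le_trans h1 (mass_mono ν hsub)
    rw [memSummable, top_le_iff.mp h2] at hc
    exact absurd hc (lt_irrefl _)
  · -- fibers are finite
    intro n
    rw [hfib n]
    exact (B n).finite_toSet
  · -- the Rudin-Blass reduction
    intro X
    have hXlow : mass μ X ≤ mass ν (A ∩ f ⁻¹' X) := by
      rw [hmass X, mass]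
      exact ENNReal.tsum_le_tsum (fun n => hBlow n)
    have hXhigh : mass ν (A ∩ f ⁻¹' X) ≤ mass μ X + 2 := by
      rw [hmass X]
      calc ∑' n : X, mass ν ((B (↑n) : Set ℕ))
          ≤ ∑' n : X, (μ (↑n) + 2⁻¹ ^ (n : ℕ)) :=
            ENNReal.tsum_le_tsum (fun n => hBhigh n)
      _ = (∑' n : X, μ (↑n)) + ∑' n : X, ((2 : ℝ≥0∞)⁻¹) ^ (n : ℕ) := ENNReal.tsum_add
      _ ≤ mass μ X + 2 := by
            apply add_le_add (le_of_eq rfl)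
            calc (∑' n : X, ((2 : ℝ≥0∞)⁻¹) ^ (n : ℕ))
                = mass (fun n => ((2 : ℝ≥0∞)⁻¹) ^ n) X := rfl
            _ ≤ mass (fun n => ((2 : ℝ≥0∞)⁻¹) ^ n) Set.univ :=
                  mass_mono _ (Set.subset_univ X)
            _ = 2 := by rw [mass, tsum_univ]; exact hgeom
    constructor
    · intro hX
      rw [memSummable] at hX ⊢
      calc mass ν (A ∩ f ⁻¹' X) ≤ mass μ X + 2 := hXhigh
      _ < ⊤ := ENNReal.add_lt_top.2 ⟨hX, ENNReal.ofNat_lt_top⟩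
    · intro hX
      rw [memSummable] at hX ⊢
      exact lt_of_le_of_lt hXlow hX
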